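/- arXiv:2003.04453 — 6 statements merged into one kernel-verified Lean document; each statement's English description precedes it below -/
import Mathlib

section
/- If D is a symmetric 2-(v,k,λ) design with λ ≥ 2 and B is a block, then the derived design D^B, with point set B and blocks {B' ∩ B : B' ∈ 𝓑, B' ≠ B}, is a 2-(k, λ, λ−1) design. -/
/-- A `t`-`(v,k,lam)` design: `X` is the point set with `v` points, blocks are indexed by the
finite index set `b`, each block `blk i` is a `k`-subset of `X`, and every `t`-subset of `X`
is contained in exactly `lam` blocks. -/
def IsDesign {α ι : Type*} [DecidableEq α] (X : Finset α) (b : Finset ι)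
    (blk : ι → Finset α) (v k t lam : ℕ) : Prop :=
  X.card = v ∧ (∀ i ∈ b, blk i ⊆ X ∧ (blk i).card = k) ∧
    ∀ T ⊆ X, T.card = t → (b.filter fun i => T ⊆ blk i).card = lam

open Finset

lemma dcount {α ι : Type*} [DecidableEq α] [DecidableEq ι]
    (X : Finset α) (b : Finset ι) (P : α → ι → Prop) [∀ p i, Decidable (P p i)] :
    ∑ p ∈ X, (b.filter (fun i => P p i)).card = ∑ i ∈ b, (X.filter (fun p => P p i)).card := by
  simp only [card_filter]; exact Finset.sum_comm

section
variable {α ι : Type*} [DecidableEq α] [DecidableEq ι]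
  (X : Finset α) (b : Finset ι) (blk : ι → Finset α) (v k lam : ℕ)

-- replication number: r_p * (k-1) = (v-1) * lam
lemma rep_count (hX : X.card = v)
    (hblk : ∀ i ∈ b, blk i ⊆ X ∧ (blk i).card = k)
    (hT : ∀ T ⊆ X, T.card = 2 → (b.filter fun i => T ⊆ blk i).card = lam)
    (p : α) (hp : p ∈ X) :
    (b.filter fun i => p ∈ blk i).card * (k - 1) = (v - 1) * lam := by
  have key := dcount (X.erase p) b (fun q i => p ∈ blk i ∧ q ∈ blk i)
  have lhs : ∑ q ∈ X.erase p, (b.filter fun i => p ∈ blk i ∧ q ∈ blk i).card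
      = (v - 1) * lam := by
    rw [Finset.sum_congr rfl (fun q hq => ?_), Finset.sum_const, smul_eq_mul,
      card_erase_of_mem hp, hX]
    have hq' : q ∈ X := mem_of_mem_erase hq
    have hqp : q ≠ p := ne_of_mem_erase hq
    have : (b.filter fun i => p ∈ blk i ∧ q ∈ blk i)
        = b.filter fun i => ({p, q} : Finset α) ⊆ blk i := by
      apply filter_congr; intro i _
      simp [insert_subset_iff]
    rw [this]
    exact hT {p, q} (by simp [insert_subset_iff, hp, hq'])
      (by rw [card_insert_of_notMem (by simp [hqp.symm]), card_singleton])
  have rhs : ∑ i ∈ b, ((X.erase p).filter fun q => p ∈ blk i ∧ q ∈ blk i).card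
      = (b.filter fun i => p ∈ blk i).card * (k - 1) := by
    have step : ∀ i ∈ b, ((X.erase p).filter fun q => p ∈ blk i ∧ q ∈ blk i).card
        = if p ∈ blk i then k - 1 else 0 := by
      intro i hi
      by_cases hpi : p ∈ blk i
      · simp only [hpi, true_and, if_pos]
        have : (X.erase p).filter (fun q => q ∈ blk i) = (blk i).erase p := by
          ext q
          simp only [mem_filter, mem_erase]
          constructor
          · rintro ⟨⟨h1, _⟩, h2⟩; exact ⟨h1, h2⟩
          · rintro ⟨h1, h2⟩; exact ⟨⟨h1, (hblk i hi).1 h2⟩, h2⟩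
        rw [this, card_erase_of_mem hpi, (hblk i hi).2]
      · simp [hpi]
    rw [Finset.sum_congr rfl step, ← Finset.sum_filter, Finset.sum_const, smul_eq_mul]
  rw [lhs, rhs] at key
  exact key.symm

end

/-- The derived design of a symmetric 2-(v,k,λ) design (λ ≥ 2) with respect to a block is
a 2-(k, λ, λ−1) design. -/
theorem derived_design_block {α ι : Type*} [DecidableEq α] [DecidableEq ι]
    (X : Finset α) (b : Finset ι) (blk : ι → Finset α) (v k lam : ℕ)
    (hk : 0 < k) (hkv : k < v) (hlam : 2 ≤ lam)
    (h : IsDesign X b blk v k 2 lam) (hsym : b.card = v)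
    (i0 : ι) (hi0 : i0 ∈ b) :
    IsDesign (blk i0) (b.erase i0) (fun j => blk j ∩ blk i0)
      k lam 2 (lam - 1) := by
  obtain ⟨hX, hblk, hT⟩ := h
  have hv2 : 2 ≤ v := lt_of_le_of_lt hk hkv
  -- k ≥ 2
  have hk2 : 2 ≤ k := by
    obtain ⟨T, hTX, hT2⟩ := Finset.exists_subset_card_eq (s := X) (n := 2) (by omega)
    have := hT T hTX hT2
    have hne : (b.filter fun i => T ⊆ blk i).Nonempty := by
      rw [← card_pos, this]; omega
    obtain ⟨i, hi⟩ := hne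
    rw [mem_filter] at hi
    calc 2 = T.card := hT2.symm
    _ ≤ (blk i).card := card_le_card hi.2
    _ = k := (hblk i hi.1).2
  -- every point is on exactly k blocks
  have hrk : ∀ p ∈ X, (b.filter fun i => p ∈ blk i).card = k := by
    intro p hp
    have key := dcount X b (fun q i => q ∈ blk i)
    have rhs : ∑ i ∈ b, (X.filter fun q => q ∈ blk i).card = v * k := by
      rw [Finset.sum_congr rfl (fun i hi => ?_), Finset.sum_const, smul_eq_mul, hsym]
      rw [filter_mem_eq_inter, inter_eq_right.mpr (hblk i hi).1, (hblk i hi).2]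
    have heq : ∀ q ∈ X, (b.filter fun i => q ∈ blk i).card
        = (b.filter fun i => p ∈ blk i).card := by
      intro q hq
      have h1 := rep_count X b blk v k lam hX hblk hT q hq
      have h2 := rep_count X b blk v k lam hX hblk hT p hp
      have : 0 < k - 1 := by omega
      exact Nat.eq_of_mul_eq_mul_right this (h1.trans h2.symm)
    rw [Finset.sum_congr rfl heq, Finset.sum_const, smul_eq_mul, hX, rhs] at key
    exact Nat.eq_of_mul_eq_mul_left (by omega) key
  -- the fundamental identity
  obtain ⟨p0, hp0⟩ : X.Nonempty := by rw [← card_pos, hX]; omega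
  have hvk : (v - 1) * lam = k * (k - 1) := by
    rw [← rep_count X b blk v k lam hX hblk hT p0 hp0, hrk p0 hp0]
  have hBX : blk i0 ⊆ X := (hblk i0 hi0).1
  have hB : (blk i0).card = k := (hblk i0 hi0).2
  -- sum of intersection sizes
  have S1 : ∑ j ∈ b.erase i0, (blk j ∩ blk i0).card = k * (k - 1) := by
    have key := dcount (blk i0) (b.erase i0) (fun p j => p ∈ blk j)
    have lhs : ∑ p ∈ blk i0, ((b.erase i0).filter fun j => p ∈ blk j).card
        = k * (k - 1) := by
      rw [Finset.sum_congr rfl (fun p hp => ?_), Finset.sum_const, smul_eq_mul, hB]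
      rw [filter_erase, card_erase_of_mem (mem_filter.mpr ⟨hi0, hp⟩), hrk p (hBX hp)]
    have rhs : ∀ j ∈ b.erase i0, ((blk i0).filter fun p => p ∈ blk j).card
        = (blk j ∩ blk i0).card := by
      intro j _
      rw [filter_mem_eq_inter, inter_comm]
    rw [lhs, Finset.sum_congr rfl rhs] at key
    exact key.symm
  -- sum of x(x-1)
  have S2 : ∑ j ∈ b.erase i0,
      ((blk j ∩ blk i0).card * (blk j ∩ blk i0).card - (blk j ∩ blk i0).card)
      = (k * k - k) * (lam - 1) := by
    have key := dcount (blk i0).offDiag (b.erase i0)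
      (fun pq j => pq.1 ∈ blk j ∧ pq.2 ∈ blk j)
    have lhs : ∑ pq ∈ (blk i0).offDiag,
        ((b.erase i0).filter fun j => pq.1 ∈ blk j ∧ pq.2 ∈ blk j).card
        = (k * k - k) * (lam - 1) := by
      rw [Finset.sum_congr rfl (fun pq hpq => ?_), Finset.sum_const, smul_eq_mul,
        offDiag_card, hB]
      rw [mem_offDiag] at hpq
      have e : (b.filter fun j => pq.1 ∈ blk j ∧ pq.2 ∈ blk j)
          = b.filter fun j => ({pq.1, pq.2} : Finset α) ⊆ blk j := by
        apply filter_congr; intro j _; simp [insert_subset_iff]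
      have hcard : ({pq.1, pq.2} : Finset α).card = 2 := by
        rw [card_insert_of_notMem (by simp [hpq.2.2]), card_singleton]
      have hsub : ({pq.1, pq.2} : Finset α) ⊆ X := by
        simp [insert_subset_iff, hBX hpq.1, hBX hpq.2.1]
      rw [filter_erase, card_erase_of_mem, e, hT _ hsub hcard]
      rw [e, mem_filter]
      exact ⟨hi0, by simp [insert_subset_iff, hpq.1, hpq.2.1]⟩
    have rhs : ∀ j ∈ b.erase i0, ((blk i0).offDiag.filter
        fun pq => pq.1 ∈ blk j ∧ pq.2 ∈ blk j).card
        = (blk j ∩ blk i0).card * (blk j ∩ blk i0).card - (blk j ∩ blk i0).card := by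
      intro j _
      rw [← offDiag_card]
      congr 1
      ext pq
      simp only [mem_filter, mem_offDiag, mem_inter]
      tauto
    rw [lhs, Finset.sum_congr rfl rhs] at key
    exact key.symm
  -- variance argument over ℤ
  have hx : ∀ j ∈ b.erase i0, (blk j ∩ blk i0).card = lam := by
    have ecard : (b.erase i0).card = v - 1 := by rw [card_erase_of_mem hi0, hsym]
    have e1 : ∑ j ∈ b.erase i0, ((blk j ∩ blk i0).card : ℤ)
        = (k : ℤ) * ((k : ℤ) - 1) := by
      rw [← Nat.cast_sum, S1, Nat.cast_mul, Nat.cast_sub (by omega), Nat.cast_one]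
    have e2 : ∑ j ∈ b.erase i0, (((blk j ∩ blk i0).card : ℤ) * ((blk j ∩ blk i0).card : ℤ)
        - ((blk j ∩ blk i0).card : ℤ))
        = ((k : ℤ) * k - k) * ((lam : ℤ) - 1) := by
      have hle : ∀ j : ι, (blk j ∩ blk i0).card ≤ (blk j ∩ blk i0).card * (blk j ∩ blk i0).card := by
        intro j
        rcases Nat.eq_zero_or_pos (blk j ∩ blk i0).card with h0 | h0
        · simp [h0]
        · exact Nat.le_mul_of_pos_left _ h0
      calc ∑ j ∈ b.erase i0, (((blk j ∩ blk i0).card : ℤ) * ((blk j ∩ blk i0).card : ℤ)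
            - ((blk j ∩ blk i0).card : ℤ))
          = ∑ j ∈ b.erase i0, (((blk j ∩ blk i0).card * (blk j ∩ blk i0).card
              - (blk j ∩ blk i0).card : ℕ) : ℤ) := by
            refine Finset.sum_congr rfl fun j _ => ?_
            rw [Nat.cast_sub (hle j), Nat.cast_mul]
        _ = (((k * k - k) * (lam - 1) : ℕ) : ℤ) := by rw [← Nat.cast_sum, S2]
        _ = ((k : ℤ) * k - k) * ((lam : ℤ) - 1) := by
            rw [Nat.cast_mul, Nat.cast_sub (Nat.le_mul_of_pos_left _ hk),
              Nat.cast_sub (by omega), Nat.cast_mul, Nat.cast_one]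
    have hvk' : ((v : ℤ) - 1) * (lam : ℤ) = (k : ℤ) * ((k : ℤ) - 1) := by
      zify [show 1 ≤ v by omega, show 1 ≤ k by omega] at hvk
      exact_mod_cast hvk
    have hzero : ∑ j ∈ b.erase i0, (((blk j ∩ blk i0).card : ℤ) - (lam : ℤ)) ^ 2 = 0 := by
      have expand : ∀ j ∈ b.erase i0, (((blk j ∩ blk i0).card : ℤ) - (lam : ℤ)) ^ 2
          = (((blk j ∩ blk i0).card : ℤ) * ((blk j ∩ blk i0).card : ℤ)
            - ((blk j ∩ blk i0).card : ℤ))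
            + (1 - 2 * (lam : ℤ)) * ((blk j ∩ blk i0).card : ℤ) + (lam : ℤ) ^ 2 := by
        intro j _; ring
      rw [Finset.sum_congr rfl expand, Finset.sum_add_distrib, Finset.sum_add_distrib,
        ← Finset.mul_sum, e1, e2, Finset.sum_const, ecard, nsmul_eq_mul,
        Nat.cast_sub (by omega), Nat.cast_one]
      linear_combination (lam : ℤ) * hvk'
    intro j hj
    have := (Finset.sum_eq_zero_iff_of_nonneg (fun j _ => sq_nonneg _)).mp hzero j hj
    have := pow_eq_zero_iff (n := 2) (by norm_num) |>.mp this
    have := sub_eq_zero.mp this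
    exact_mod_cast this
  -- assemble the design
  refine ⟨hB, fun j hj => ⟨inter_subset_right, hx j hj⟩, ?_⟩
  intro T hTsub hT2
  have hTX : T ⊆ X := hTsub.trans hBX
  have e : ((b.erase i0).filter fun j => T ⊆ (fun j => blk j ∩ blk i0) j)
      = (b.filter fun j => T ⊆ blk j).erase i0 := by
    rw [← filter_erase]
    apply filter_congr
    intro j _
    simp only [subset_inter_iff]
    exact ⟨fun h => h.1, fun h => ⟨h, hTsub⟩⟩
  rw [e, card_erase_of_mem (mem_filter.mpr ⟨hi0, hTsub⟩), hT T hTX hT2]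
end

section
/- Let D be a quasi-symmetric 2-(56,12,9) design with block intersection numbers 0 and 3, and let z be a point. Then the derived design D^z is a 1-(55,11,9) design with 45 blocks, and any two blocks of D^z intersect in exactly 2 points; consequently the dual of D^z is a 2-(45,9,2) design. -/
/-- The derived design with respect to a point z of a quasi-symmetric 2-(56,12,9) design with
intersection numbers 0 and 3 is a 1-(55,11,9) design with 45 blocks in which any two distinct
blocks meet in exactly 2 points; consequently its dual is a 2-(45,9,2) design. -/
theorem derived_of_qs_56_12_9 {α ι : Type*} [DecidableEq α] [DecidableEq ι]
    (X : Finset α) (b : Finset ι) (blk : ι → Finset α)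
    (h : IsDesign X b blk 56 12 2 9)
    (hq : ∀ i ∈ b, ∀ j ∈ b, i ≠ j →
      (blk i ∩ blk j).card = 0 ∨ (blk i ∩ blk j).card = 3)
    (z : α) (hz : z ∈ X) :
    (b.filter fun i => z ∈ blk i).card = 45 ∧
    (∀ i ∈ b.filter fun i => z ∈ blk i, ((blk i).erase z).card = 11) ∧
    (∀ p ∈ X.erase z,
      ((b.filter fun i => z ∈ blk i).filter fun i => p ∈ (blk i).erase z).card = 9) ∧
    (∀ i ∈ b.filter fun i => z ∈ blk i, ∀ j ∈ b.filter fun i => z ∈ blk i, i ≠ j →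
      (((blk i).erase z) ∩ ((blk j).erase z)).card = 2) ∧
    -- the dual of the derived design is a 2-(45,9,2) design:
    IsDesign (α := ι) (ι := α) (b.filter fun i => z ∈ blk i) (X.erase z)
      (fun p => (b.filter fun i => z ∈ blk i).filter fun i => p ∈ (blk i).erase z)
      45 9 2 2 := by
  obtain ⟨hX, hblk, hpair⟩ := h
  classical
  set S := b.filter fun i => z ∈ blk i with hSdef
  have hmemS : ∀ i, i ∈ S ↔ i ∈ b ∧ z ∈ blk i := by intro i; simp [hSdef]
  have h11 : ∀ i ∈ S, ((blk i).erase z).card = 11 := by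
    intro i hi
    obtain ⟨hib, hzb⟩ := (hmemS i).mp hi
    rw [Finset.card_erase_of_mem hzb, (hblk i hib).2]
  have h9 : ∀ p ∈ X.erase z, (S.filter fun i => p ∈ (blk i).erase z).card = 9 := by
    intro p hp
    obtain ⟨hpz, hpX⟩ := Finset.mem_erase.mp hp
    have hT : ({z, p} : Finset α) ⊆ X := by
      intro x hx; simp at hx; rcases hx with h | h <;> simp [h, hz, hpX]
    have hTc : ({z, p} : Finset α).card = 2 := by
      rw [Finset.card_insert_of_notMem (by simp [Ne.symm hpz]), Finset.card_singleton]
    have := hpair {z, p} hT hTc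
    rw [← this]
    congr 1
    ext i
    simp only [hSdef, Finset.mem_filter, Finset.mem_erase, Finset.insert_subset_iff,
      Finset.singleton_subset_iff]
    tauto
  -- double counting for hcount
  have hsub : ∀ i ∈ S, (blk i).erase z ⊆ X.erase z := by
    intro i hi
    exact Finset.erase_subset_erase z (hblk i ((hmemS i).mp hi).1).1
  have hdc : ∑ i ∈ S, ((blk i).erase z).card
      = ∑ p ∈ X.erase z, (S.filter fun i => p ∈ (blk i).erase z).card := by
    have : ∀ i ∈ S, ((blk i).erase z).card
        = ((X.erase z).filter fun p => p ∈ (blk i).erase z).card := by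
      intro i hi
      congr 1
      rw [Finset.filter_mem_eq_inter, Finset.inter_eq_right.mpr (hsub i hi)]
    rw [Finset.sum_congr rfl this]
    simp_rw [Finset.card_filter]
    exact Finset.sum_comm
  have hXz : (X.erase z).card = 55 := by rw [Finset.card_erase_of_mem hz, hX]
  have hcount : S.card = 45 := by
    rw [Finset.sum_congr rfl h11, Finset.sum_const, smul_eq_mul,
      Finset.sum_congr rfl h9, Finset.sum_const, smul_eq_mul, hXz] at hdc
    omega
  have hint2 : ∀ i ∈ S, ∀ j ∈ S, i ≠ j →
      (((blk i).erase z) ∩ ((blk j).erase z)).card = 2 := by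
    intro i hi j hj hij
    obtain ⟨hib, hzi⟩ := (hmemS i).mp hi
    obtain ⟨hjb, hzj⟩ := (hmemS j).mp hj
    have hzint : z ∈ blk i ∩ blk j := Finset.mem_inter.mpr ⟨hzi, hzj⟩
    have h3 : (blk i ∩ blk j).card = 3 := by
      rcases hq i hib j hjb hij with h0 | h3
      · exact absurd (Finset.card_eq_zero.mp h0 ▸ hzint) (Finset.notMem_empty z)
      · exact h3
    have : ((blk i).erase z) ∩ ((blk j).erase z) = (blk i ∩ blk j).erase z := by
      ext x; simp [Finset.mem_erase, Finset.mem_inter]; tauto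
    rw [this, Finset.card_erase_of_mem hzint, h3]
  refine ⟨hcount, h11, h9, hint2, hcount, ?_, ?_⟩
  · intro p hp
    exact ⟨Finset.filter_subset _ _, h9 p hp⟩
  · intro T hT hTc
    obtain ⟨i, j, hij, rfl⟩ := Finset.card_eq_two.mp hTc
    have hiS : i ∈ S := hT (by simp)
    have hjS : j ∈ S := hT (by simp)
    have : ((X.erase z).filter fun p =>
        ({i, j} : Finset ι) ⊆ S.filter fun k => p ∈ (blk k).erase z)
        = ((blk i).erase z) ∩ ((blk j).erase z) := by
      ext p
      simp only [Finset.mem_filter, Finset.insert_subset_iff, Finset.singleton_subset_iff,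
        Finset.mem_inter]
      constructor
      · rintro ⟨-, ⟨-, h1⟩, ⟨-, h2⟩⟩; exact ⟨h1, h2⟩
      · rintro ⟨h1, h2⟩
        refine ⟨hsub i hiS h1, ⟨hiS, h1⟩, hjS, h2⟩
    rw [this, hint2 i hiS j hjS hij]
end

section
/- If a quasi-symmetric 2-(57,12,11) design with block intersection numbers 0 and 3 exists, then its residual design with respect to any point is a quasi-symmetric 2-(56,12,9) design with block intersection numbers 0 and 3. -/
theorem triple_count {α ι : Type*} [DecidableEq α]
    (X : Finset α) (b : Finset ι) (blk : ι → Finset α)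
    (h : IsDesign X b blk 57 12 2 11)
    (hq : ∀ i ∈ b, ∀ j ∈ b, i ≠ j →
      (blk i ∩ blk j).card = 0 ∨ (blk i ∩ blk j).card = 3)
    (x y z : α) (hx : x ∈ X) (hy : y ∈ X) (hz : z ∈ X)
    (hxy : x ≠ y) (hxz : x ≠ z) (hyz : y ≠ z) :
    (b.filter fun i => x ∈ blk i ∧ y ∈ blk i ∧ z ∈ blk i).card = 2 := by
  classical
  obtain ⟨hX, hblk, hlam⟩ := h
  set S : Finset ι := b.filter fun i => x ∈ blk i ∧ z ∈ blk i with hSdef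
  have hS : S.card = 11 := by
    have := hlam {x, z} (by
      intro w hw; simp only [Finset.mem_insert, Finset.mem_singleton] at hw
      rcases hw with rfl | rfl <;> assumption) (Finset.card_pair hxz)
    rw [← this]
    congr 1
    apply Finset.filter_congr
    intro i _
    simp [Finset.insert_subset_iff]
  -- basic facts about members of S
  have hmem : ∀ i ∈ S, i ∈ b ∧ x ∈ blk i ∧ z ∈ blk i := by
    intro i hi; simpa [hSdef] using hi
  have hint : ∀ i ∈ S, ∀ j ∈ S, i ≠ j → (blk i ∩ blk j).card = 3 := by
    intro i hi j hj hij
    obtain ⟨hib, hxi, hzi⟩ := hmem i hi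
    obtain ⟨hjb, hxj, hzj⟩ := hmem j hj
    rcases hq i hib j hjb hij with h0 | h3
    · exfalso
      have : x ∈ blk i ∩ blk j := Finset.mem_inter.mpr ⟨hxi, hxj⟩
      have := Finset.card_pos.mpr ⟨x, this⟩
      omega
    · exact h3
  set Y : Finset α := (X.erase z).erase x with hYdef
  have hYcard : Y.card = 55 := by
    rw [hYdef, Finset.card_erase_of_mem (Finset.mem_erase.mpr ⟨hxz, hx⟩),
      Finset.card_erase_of_mem hz, hX]
  set n : α → ℕ := fun w => (S.filter fun i => w ∈ blk i).card with hndef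
  -- single block restricted to Y has 10 points
  have hone : ∀ i ∈ S, (Y.filter fun w => w ∈ blk i).card = 10 := by
    intro i hi
    obtain ⟨hib, hxi, hzi⟩ := hmem i hi
    have hsub := (hblk i hib).1
    have hcard := (hblk i hib).2
    have : Y.filter (fun w => w ∈ blk i) = ((blk i).erase z).erase x := by
      ext w
      simp only [hYdef, Finset.mem_filter, Finset.mem_erase]
      constructor
      · rintro ⟨⟨h1, h2, _⟩, h4⟩; exact ⟨h1, h2, h4⟩
      · rintro ⟨h1, h2, h3⟩; exact ⟨⟨h1, h2, hsub h3⟩, h3⟩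
    rw [this, Finset.card_erase_of_mem (Finset.mem_erase.mpr ⟨hxz, hxi⟩),
      Finset.card_erase_of_mem hzi, hcard]
  -- two distinct blocks restricted to Y share 1 point
  have htwo : ∀ i ∈ S, ∀ j ∈ S, i ≠ j →
      (Y.filter fun w => w ∈ blk i ∧ w ∈ blk j).card = 1 := by
    intro i hi j hj hij
    obtain ⟨hib, hxi, hzi⟩ := hmem i hi
    obtain ⟨hjb, hxj, hzj⟩ := hmem j hj
    have hsub := (hblk i hib).1
    have : Y.filter (fun w => w ∈ blk i ∧ w ∈ blk j)
        = ((blk i ∩ blk j).erase z).erase x := by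
      ext w
      simp only [hYdef, Finset.mem_filter, Finset.mem_erase, Finset.mem_inter]
      constructor
      · rintro ⟨⟨h1, h2, _⟩, h4, h5⟩; exact ⟨h1, h2, h4, h5⟩
      · rintro ⟨h1, h2, h3, h4⟩; exact ⟨⟨h1, h2, hsub h3⟩, h3, h4⟩
    rw [this, Finset.card_erase_of_mem
        (Finset.mem_erase.mpr ⟨hxz, Finset.mem_inter.mpr ⟨hxi, hxj⟩⟩),
      Finset.card_erase_of_mem (Finset.mem_inter.mpr ⟨hzi, hzj⟩),
      hint i hi j hj hij]
  -- sum of n over Y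
  have hsum : ∑ w ∈ Y, n w = 110 := by
    have : ∑ w ∈ Y, n w = ∑ i ∈ S, (Y.filter fun w => w ∈ blk i).card := by
      simp only [hndef, Finset.card_filter]
      exact Finset.sum_comm
    rw [this, Finset.sum_congr rfl hone]
    simp [hS]
  -- sum of n² over Y
  have hsq : ∑ w ∈ Y, n w * n w = 220 := by
    have step1 : ∀ w, n w * n w =
        ∑ i ∈ S, ∑ j ∈ S, (if w ∈ blk i ∧ w ∈ blk j then 1 else 0) := by
      intro w
      rw [hndef]
      simp only [Finset.card_filter]
      rw [Finset.sum_mul_sum]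
      refine Finset.sum_congr rfl fun i _ => Finset.sum_congr rfl fun j _ => ?_
      by_cases h1 : w ∈ blk i <;> by_cases h2 : w ∈ blk j <;> simp [h1, h2]
    calc ∑ w ∈ Y, n w * n w
        = ∑ w ∈ Y, ∑ i ∈ S, ∑ j ∈ S, (if w ∈ blk i ∧ w ∈ blk j then 1 else 0) :=
          Finset.sum_congr rfl fun w _ => step1 w
      _ = ∑ i ∈ S, ∑ w ∈ Y, ∑ j ∈ S, (if w ∈ blk i ∧ w ∈ blk j then 1 else 0) :=
          Finset.sum_comm
      _ = ∑ i ∈ S, ∑ j ∈ S, ∑ w ∈ Y, (if w ∈ blk i ∧ w ∈ blk j then 1 else 0) :=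
          Finset.sum_congr rfl fun i _ => Finset.sum_comm
      _ = ∑ i ∈ S, ∑ j ∈ S, (Y.filter fun w => w ∈ blk i ∧ w ∈ blk j).card :=
          Finset.sum_congr rfl fun i _ => Finset.sum_congr rfl fun j _ =>
            (Finset.card_filter _ _).symm
      _ = 220 := by
          have hrow : ∀ i ∈ S,
              ∑ j ∈ S, (Y.filter fun w => w ∈ blk i ∧ w ∈ blk j).card = 20 := by
            intro i hi
            rw [← Finset.sum_erase_add _ _ hi]
            have hii : (Y.filter fun w => w ∈ blk i ∧ w ∈ blk i).card = 10 := by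
              simpa using hone i hi
            have hoff : ∑ j ∈ S.erase i,
                (Y.filter fun w => w ∈ blk i ∧ w ∈ blk j).card = 10 := by
              rw [Finset.sum_congr rfl fun j hj =>
                htwo i hi j (Finset.mem_of_mem_erase hj)
                  (Ne.symm (Finset.ne_of_mem_erase hj))]
              simp [Finset.card_erase_of_mem hi, hS]
            omega
          rw [Finset.sum_congr rfl hrow]
          simp [hS]
  -- variance argument : n w = 2 for all w ∈ Y
  have hzero : ∑ w ∈ Y, ((n w : ℤ) - 2) ^ 2 = 0 := by
    have e : ∀ w, ((n w : ℤ) - 2) ^ 2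
        = (n w : ℤ) * (n w : ℤ) - (4 : ℤ) * (n w : ℤ) + 4 := fun w => by ring
    rw [Finset.sum_congr rfl fun w _ => e w, Finset.sum_add_distrib,
      Finset.sum_sub_distrib]
    have h1 : ∑ w ∈ Y, (n w : ℤ) * (n w : ℤ) = 220 := by exact_mod_cast hsq
    have h2 : ∑ w ∈ Y, (4 : ℤ) * (n w : ℤ) = 440 := by
      rw [← Finset.mul_sum]
      have : ∑ w ∈ Y, (n w : ℤ) = 110 := by exact_mod_cast hsum
      rw [this]; norm_num
    have h3 : ∑ _w ∈ Y, (4 : ℤ) = 220 := by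
      rw [Finset.sum_const, hYcard]; norm_num
    rw [h1, h2, h3]; norm_num
  have hn2 : ∀ w ∈ Y, n w = 2 := by
    intro w hw
    have := (Finset.sum_eq_zero_iff_of_nonneg (fun i _ => sq_nonneg _)).mp hzero w hw
    have : (n w : ℤ) = 2 := by nlinarith [this]
    exact_mod_cast this
  -- conclude
  have hy' : y ∈ Y := Finset.mem_erase.mpr ⟨hxy.symm, Finset.mem_erase.mpr ⟨hyz, hy⟩⟩
  have := hn2 y hy'
  rw [hndef] at this
  simp only [hSdef, Finset.filter_filter] at this
  rw [← this]
  congr 1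
  apply Finset.filter_congr
  intro i _
  tauto

/-- The residual design with respect to any point of a quasi-symmetric 2-(57,12,11) design with
block intersection numbers 0 and 3 is a quasi-symmetric 2-(56,12,9) design with block
intersection numbers 0 and 3. -/
theorem residual_of_qs_57_12_11 {α ι : Type*} [DecidableEq α]
    (X : Finset α) (b : Finset ι) (blk : ι → Finset α)
    (h : IsDesign X b blk 57 12 2 11)
    (hq : ∀ i ∈ b, ∀ j ∈ b, i ≠ j →
      (blk i ∩ blk j).card = 0 ∨ (blk i ∩ blk j).card = 3)
    (z : α) (hz : z ∈ X) :
    IsDesign (X.erase z) (b.filter fun i => z ∉ blk i) blk 56 12 2 9 ∧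
    (∀ i ∈ b.filter fun i => z ∉ blk i, ∀ j ∈ b.filter fun i => z ∉ blk i, i ≠ j →
      (blk i ∩ blk j).card = 0 ∨ (blk i ∩ blk j).card = 3) := by
  classical
  obtain ⟨hX, hblk, hlam⟩ := h
  constructor
  · refine ⟨by rw [Finset.card_erase_of_mem hz, hX], ?_, ?_⟩
    · intro i hi
      rw [Finset.mem_filter] at hi
      obtain ⟨hib, hzi⟩ := hi
      refine ⟨?_, (hblk i hib).2⟩
      intro w hw
      exact Finset.mem_erase.mpr ⟨fun hwz => hzi (hwz ▸ hw), (hblk i hib).1 hw⟩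
    · intro T hT hT2
      obtain ⟨x, y, hxy, rfl⟩ := Finset.card_eq_two.mp hT2
      have hxX : x ∈ X.erase z := hT (by simp)
      have hyX : y ∈ X.erase z := hT (by simp)
      obtain ⟨hxz, hx⟩ := Finset.mem_erase.mp hxX
      obtain ⟨hyz, hy⟩ := Finset.mem_erase.mp hyX
      -- total blocks through {x,y} is 11
      have htot : (b.filter fun i => x ∈ blk i ∧ y ∈ blk i).card = 11 := by
        have := hlam {x, y} (by
          intro w hw; simp only [Finset.mem_insert, Finset.mem_singleton] at hw
          rcases hw with rfl | rfl <;> assumption) (Finset.card_pair hxy)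
        rw [← this]
        congr 1
        apply Finset.filter_congr
        intro i _
        simp [Finset.insert_subset_iff]
      -- blocks through {x,y,z} is 2
      have htrip := triple_count X b blk ⟨hX, hblk, hlam⟩ hq x y z hx hy hz hxy hxz hyz
      -- split
      have hsplit := Finset.card_filter_add_card_filter_not
        (s := b.filter fun i => x ∈ blk i ∧ y ∈ blk i) (p := fun i => z ∈ blk i)
      rw [Finset.filter_filter, Finset.filter_filter] at hsplit
      have e1 : (b.filter fun i => (x ∈ blk i ∧ y ∈ blk i) ∧ z ∈ blk i).card = 2 := by
        rw [← htrip]; congr 1; apply Finset.filter_congr; intro i _; tauto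
      have e2 : ((b.filter fun i => z ∉ blk i).filter fun i => {x, y} ⊆ blk i).card
          = (b.filter fun i => (x ∈ blk i ∧ y ∈ blk i) ∧ z ∉ blk i).card := by
        rw [Finset.filter_filter]
        congr 1
        apply Finset.filter_congr
        intro i _
        simp [Finset.insert_subset_iff]
        tauto
      rw [e2]
      omega
  · intro i hi j hj hij
    exact hq i (Finset.mem_of_mem_filter i hi) j (Finset.mem_of_mem_filter j hj) hij
end

section
/- If the nonexistence of a quasi-symmetric 2-(56,12,9) design with block intersection numbers 0 and 3 is assumed, then no quasi-symmetric 2-(57,12,11) design with block intersection numbers 0 and 3 exists. -/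
open Finset

lemma cast_card (s : Finset (Fin 57)) (hs : Fin.last 56 ∉ s) :
    (univ.filter fun x : Fin 56 => x.castSucc ∈ s).card = s.card := by
  apply Finset.card_bij (fun x _ => Fin.castSucc x)
  · intro a ha; simpa using (Finset.mem_filter.mp ha).2
  · intro a ha b hb h; exact Fin.castSucc_injective _ h
  · intro z hz
    obtain ⟨y, rfl⟩ := Fin.exists_castSucc_eq.mpr (fun h => hs (h ▸ hz))
    exact ⟨y, by simpa using hz, rfl⟩

lemma lambda3 {ι : Type} (b : Finset ι) (blk : ι → Finset (Fin 57))
    (hD : IsDesign Finset.univ b blk 57 12 2 11)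
    (hqs : ∀ i ∈ b, ∀ j ∈ b, i ≠ j →
      (blk i ∩ blk j).card = 0 ∨ (blk i ∩ blk j).card = 3)
    (T : Finset (Fin 57)) (hT : T.card = 2) (p : Fin 57) (hp : p ∉ T) :
    (b.filter fun i => p ∈ blk i ∧ T ⊆ blk i).card = 2 := by
  classical
  obtain ⟨-, hblocks, hpairs⟩ := hD
  set B2 := b.filter (fun i => T ⊆ blk i) with hB2def
  have hB2 : B2.card = 11 := hpairs T (subset_univ T) hT
  have hmem : ∀ i ∈ B2, i ∈ b ∧ T ⊆ blk i := fun i hi => by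
    simpa [hB2def] using (Finset.mem_filter.mp hi)
  have hcard10 : ∀ i ∈ B2, (blk i \ T).card = 10 := by
    intro i hi
    rw [Finset.card_sdiff_of_subset (hmem i hi).2, (hblocks i (hmem i hi).1).2, hT]
  have hfilt : ∀ i ∈ B2, ∀ j ∈ B2, (univ \ T).filter (fun q => q ∈ blk i ∧ q ∈ blk j)
      = (blk i ∩ blk j) \ T := by
    intro i hi j hj; ext q
    simp [Finset.mem_sdiff, Finset.mem_filter, Finset.mem_inter]; tauto
  have hinter : ∀ i ∈ B2, ∀ j ∈ B2, ((blk i ∩ blk j) \ T).card = if i = j then 10 else 1 := by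
    intro i hi j hj
    by_cases h : i = j
    · subst h; simp only [if_pos rfl, Finset.inter_self]; exact hcard10 i hi
    · rw [if_neg h]
      have hTsub : T ⊆ blk i ∩ blk j :=
        Finset.subset_inter (hmem i hi).2 (hmem j hj).2
      have h3 : (blk i ∩ blk j).card = 3 := by
        rcases hqs i (hmem i hi).1 j (hmem j hj).1 h with h0 | h3
        · exfalso
          have := Finset.card_le_card hTsub
          omega
        · exact h3
      rw [Finset.card_sdiff_of_subset hTsub, h3, hT]
  set S := (univ : Finset (Fin 57)) \ T with hSdef
  have hScard : S.card = 55 := by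
    rw [hSdef, Finset.card_sdiff_of_subset (subset_univ T), hT]; rfl
  set f : Fin 57 → ℕ := fun q => (B2.filter fun i => q ∈ blk i).card with hfdef
  have hsum : ∑ q ∈ S, f q = 110 := by
    have : ∑ q ∈ S, f q = ∑ q ∈ S, ∑ i ∈ B2, (if q ∈ blk i then 1 else 0) := by
      apply Finset.sum_congr rfl; intro q _
      simp only [hfdef, Finset.card_filter]
    rw [this, Finset.sum_comm]
    have : ∀ i ∈ B2, ∑ q ∈ S, (if q ∈ blk i then 1 else 0) = 10 := by
      intro i hi
      rw [← Finset.card_filter]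
      have : S.filter (fun q => q ∈ blk i) = blk i \ T := by
        ext q; simp [hSdef, Finset.mem_sdiff, Finset.mem_filter]; tauto
      rw [this]; exact hcard10 i hi
    rw [Finset.sum_congr rfl this, Finset.sum_const, hB2]; rfl
  have hsumsq : ∑ q ∈ S, f q * f q = 220 := by
    have step : ∀ q, f q * f q
        = ∑ i ∈ B2, ∑ j ∈ B2, (if q ∈ blk i ∧ q ∈ blk j then 1 else 0) := by
      intro q
      rw [hfdef]
      simp only [Finset.card_filter]
      rw [Finset.sum_mul_sum]
      apply Finset.sum_congr rfl; intro i _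
      apply Finset.sum_congr rfl; intro j _
      by_cases h1 : q ∈ blk i <;> by_cases h2 : q ∈ blk j <;> simp [h1, h2]
    calc ∑ q ∈ S, f q * f q
        = ∑ q ∈ S, ∑ i ∈ B2, ∑ j ∈ B2, (if q ∈ blk i ∧ q ∈ blk j then 1 else 0) :=
          Finset.sum_congr rfl (fun q _ => step q)
      _ = ∑ i ∈ B2, ∑ j ∈ B2, ∑ q ∈ S, (if q ∈ blk i ∧ q ∈ blk j then 1 else 0) := by
          rw [Finset.sum_comm]
          exact Finset.sum_congr rfl (fun i _ => Finset.sum_comm)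
      _ = ∑ i ∈ B2, ∑ j ∈ B2, (if i = j then 10 else 1) := by
          apply Finset.sum_congr rfl; intro i hi
          apply Finset.sum_congr rfl; intro j hj
          rw [← Finset.card_filter, hfilt i hi j hj, hinter i hi j hj]
      _ = 220 := by
          have : ∀ i ∈ B2, ∑ j ∈ B2, (if i = j then 10 else 1) = 20 := by
            intro i hi
            have : ∀ j, (if i = j then (10:ℕ) else 1) = 1 + (if i = j then 9 else 0) := by
              intro j; by_cases h : i = j <;> simp [h]
            rw [Finset.sum_congr rfl (fun j _ => this j), Finset.sum_add_distrib,
              Finset.sum_const, Finset.sum_ite_eq, hB2, if_pos hi]; rfl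
          rw [Finset.sum_congr rfl this, Finset.sum_const, hB2]; rfl
  have key : ∑ q ∈ S, ((f q : ℤ) - 2) ^ 2 = 0 := by
    have expand : ∀ q, ((f q : ℤ) - 2) ^ 2 = (f q : ℤ) * (f q : ℤ) - 4 * (f q : ℤ) + 4 := by
      intro q; ring
    rw [Finset.sum_congr rfl (fun q _ => expand q), Finset.sum_add_distrib,
      Finset.sum_sub_distrib, ← Finset.mul_sum, Finset.sum_const, hScard]
    have h1 : ∑ q ∈ S, (f q : ℤ) * (f q : ℤ) = 220 := by exact_mod_cast hsumsq
    have h2 : ∑ q ∈ S, (f q : ℤ) = 110 := by exact_mod_cast hsum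
    rw [h1, h2]; norm_num
  have hf2 : ∀ q ∈ S, f q = 2 := by
    intro q hq
    have := (Finset.sum_eq_zero_iff_of_nonneg (fun q _ => sq_nonneg ((f q : ℤ) - 2))).mp key q hq
    have : (f q : ℤ) - 2 = 0 := by
      have := sq_eq_zero_iff.mp this; exact this
    omega
  have hpS : p ∈ S := by simp [hSdef, hp]
  have : b.filter (fun i => p ∈ blk i ∧ T ⊆ blk i) = B2.filter (fun i => p ∈ blk i) := by
    ext i; simp [hB2def, Finset.mem_filter]; tauto
  rw [this]; exact hf2 p hpS


/-- If no quasi-symmetric 2-(56,12,9) design with block intersection numbers 0 and 3 exists,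
then no quasi-symmetric 2-(57,12,11) design with block intersection numbers 0 and 3 exists. -/
theorem no_qs_57_of_no_qs_56
    (h56 : ∀ (ι : Type) (b : Finset ι) (blk : ι → Finset (Fin 56)),
      ¬ (IsDesign Finset.univ b blk 56 12 2 9 ∧
        ∀ i ∈ b, ∀ j ∈ b, i ≠ j →
          (blk i ∩ blk j).card = 0 ∨ (blk i ∩ blk j).card = 3)) :
    ∀ (ι : Type) (b : Finset ι) (blk : ι → Finset (Fin 57)),
      ¬ (IsDesign Finset.univ b blk 57 12 2 11 ∧
        ∀ i ∈ b, ∀ j ∈ b, i ≠ j →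
          (blk i ∩ blk j).card = 0 ∨ (blk i ∩ blk j).card = 3) := by
  intro ι b blk h
  obtain ⟨hD, hqs⟩ := h
  classical
  set p : Fin 57 := Fin.last 56 with hpdef
  set b' : Finset ι := b.filter (fun i => p ∉ blk i) with hb'def
  set blk' : ι → Finset (Fin 56) :=
    fun i => univ.filter (fun x : Fin 56 => x.castSucc ∈ blk i) with hblk'def
  apply h56 ι b' blk'
  have hmemb' : ∀ i ∈ b', i ∈ b ∧ p ∉ blk i := fun i hi => by
    simpa [hb'def] using (Finset.mem_filter.mp hi)
  constructor
  · refine ⟨by simp, ?_, ?_⟩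
    · intro i hi
      refine ⟨Finset.subset_univ _, ?_⟩
      rw [hblk'def]
      rw [cast_card _ (hmemb' i hi).2]
      exact (hD.2.1 i (hmemb' i hi).1).2
    · intro T _ hT
      set T' : Finset (Fin 57) := T.image Fin.castSucc with hT'def
      have hT'card : T'.card = 2 := by
        rw [hT'def, Finset.card_image_of_injective _ (Fin.castSucc_injective _), hT]
      have hpT' : p ∉ T' := by
        rw [hT'def]
        simp only [Finset.mem_image, not_exists]
        intro x
        exact fun h => (Fin.castSucc_lt_last x).ne h.2
      have hiff : ∀ i, T ⊆ blk' i ↔ T' ⊆ blk i := by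
        intro i
        constructor
        · intro hsub z hz
          rw [hT'def] at hz
          obtain ⟨x, hx, rfl⟩ := Finset.mem_image.mp hz
          have := hsub hx
          rw [hblk'def] at this
          simpa using this
        · intro hsub x hx
          rw [hblk'def]
          simp only [Finset.mem_filter, Finset.mem_univ, true_and]
          exact hsub (Finset.mem_image_of_mem _ hx)
      have hsplit : b'.filter (fun i => T ⊆ blk' i)
          = (b.filter fun i => T' ⊆ blk i).filter (fun i => p ∉ blk i) := by
        ext i
        simp only [hb'def, Finset.mem_filter, Finset.filter_filter]
        rw [hiff i]; tauto
      have hB2 : (b.filter fun i => T' ⊆ blk i).card = 11 :=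
        hD.2.2 T' (Finset.subset_univ _) hT'card
      have hin : ((b.filter fun i => T' ⊆ blk i).filter (fun i => p ∈ blk i)).card = 2 := by
        have := lambda3 b blk hD hqs T' hT'card p hpT'
        rw [Finset.filter_filter] at *
        rw [← this]
        congr 1
        apply Finset.filter_congr
        intro i _; tauto
      have := Finset.card_filter_add_card_filter_not
        (s := b.filter fun i => T' ⊆ blk i) (p := fun i => p ∈ blk i)
      rw [hsplit]
      omega
  · intro i hi j hj hij
    have hi' := hmemb' i hi
    have hj' := hmemb' j hj
    have : blk' i ∩ blk' j = univ.filter (fun x : Fin 56 => x.castSucc ∈ blk i ∩ blk j) := by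
      ext x
      simp [hblk'def, Finset.mem_filter, Finset.mem_inter]
    rw [this, cast_card _ (fun h => hi'.2 (Finset.mem_inter.mp h).1)]
    exact hqs i hi'.1 j hj'.1 hij
end

section
/- If no quasi-symmetric 2-(57,12,11) design with block intersection numbers 0 and 3 exists, then no quasi-3 design with parameters 2-(267,57,12) and triple intersection numbers 0 and 3 exists. -/
open Finset

section Aux

variable {ι : Type} (b : Finset ι) (blk : ι → Finset (Fin 267))

/-- Pairs lie in 12 blocks. -/
lemma pair12 (hlam : ∀ T ⊆ (univ : Finset (Fin 267)), T.card = 2 →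
      (b.filter fun i => T ⊆ blk i).card = 12)
    {p q : Fin 267} (hpq : p ≠ q) :
    (b.filter fun j => p ∈ blk j ∧ q ∈ blk j).card = 12 := by
  have h2 : ({p, q} : Finset (Fin 267)).card = 2 := by
    rw [card_insert_of_notMem (by simpa using hpq), card_singleton]
  have h12 := hlam {p, q} (subset_univ _) h2
  rw [← h12]
  congr 1
  apply Finset.filter_congr
  intro j _
  simp [Finset.insert_subset_iff]

/-- Replication number is 57. -/
lemma rep57 (hblk : ∀ i ∈ b, blk i ⊆ univ ∧ (blk i).card = 57)
    (hlam : ∀ T ⊆ (univ : Finset (Fin 267)), T.card = 2 →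
      (b.filter fun i => T ⊆ blk i).card = 12)
    (p : Fin 267) : (b.filter fun j => p ∈ blk j).card = 57 := by
  set s := b.filter fun j => p ∈ blk j with hs
  have key : ∑ j ∈ s, ((blk j).erase p).card = 266 * 12 := by
    have step1 : ∀ j ∈ s, ((blk j).erase p).card
        = ∑ q ∈ (univ : Finset (Fin 267)).erase p, if q ∈ blk j then 1 else 0 := by
      intro j hj
      rw [← Finset.card_filter]
      congr 1
      ext q
      simp only [Finset.mem_erase, Finset.mem_filter, Finset.mem_univ, true_and]
      tauto
    rw [Finset.sum_congr rfl step1, Finset.sum_comm]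
    have inner : ∀ q ∈ (univ : Finset (Fin 267)).erase p,
        (∑ j ∈ s, if q ∈ blk j then 1 else 0) = 12 := by
      intro q hq
      rw [← Finset.card_filter, hs, Finset.filter_filter]
      exact pair12 b blk hlam (Ne.symm (Finset.mem_erase.mp hq).1)
    rw [Finset.sum_congr rfl inner, Finset.sum_const, smul_eq_mul,
      Finset.card_erase_of_mem (mem_univ p), Finset.card_univ, Fintype.card_fin]
  have lhs : ∑ j ∈ s, ((blk j).erase p).card = s.card * 56 := by
    rw [Finset.sum_congr rfl (fun j hj => ?_), Finset.sum_const, smul_eq_mul]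
    have hjb : j ∈ b := (Finset.mem_filter.mp hj).1
    have hpj : p ∈ blk j := (Finset.mem_filter.mp hj).2
    rw [Finset.card_erase_of_mem hpj, (hblk j hjb).2]
  omega

/-- boolean product sum equals filter card -/
lemma sum_indic_mul {s : Finset ι} (P Q : ι → Prop) [DecidablePred P] [DecidablePred Q] :
    (∑ j ∈ s, (if P j then 1 else 0) * (if Q j then 1 else 0))
      = (s.filter fun j => P j ∧ Q j).card := by
  rw [Finset.card_filter]
  refine Finset.sum_congr rfl fun j _ => ?_
  by_cases hP : P j <;> by_cases hQ : Q j <;> simp [hP, hQ]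

end Aux

/-- If no quasi-symmetric 2-(57,12,11) design with block intersection numbers 0 and 3 exists,
then no quasi-3 design with parameters 2-(267,57,12) and triple intersection numbers 0 and 3
exists. -/
theorem no_quasi3_267
    (h : ∀ (ι : Type) (b : Finset ι) (blk : ι → Finset (Fin 57)),
      ¬ (IsDesign Finset.univ b blk 57 12 2 11 ∧
        ∀ i ∈ b, ∀ j ∈ b, i ≠ j →
          (blk i ∩ blk j).card = 0 ∨ (blk i ∩ blk j).card = 3)) :
    ∀ (ι : Type) (b : Finset ι) (blk : ι → Finset (Fin 267)),
      ¬ (IsDesign Finset.univ b blk 267 57 2 12 ∧ b.card = 267 ∧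
        ∀ i ∈ b, ∀ j ∈ b, ∀ l ∈ b, i ≠ j → i ≠ l → j ≠ l →
          (blk i ∩ blk j ∩ blk l).card = 0 ∨ (blk i ∩ blk j ∩ blk l).card = 3) := by
  classical
  rintro ι b blk ⟨⟨-, hblk, hlam⟩, hb, htri⟩
  -- pick a block B
  obtain ⟨i₀, hi₀⟩ : b.Nonempty := Finset.card_pos.mp (by omega)
  set B := blk i₀ with hBdef
  have hB57 : B.card = 57 := (hblk i₀ hi₀).2
  -- intersection numbers with B
  set n : ι → ℕ := fun j => (B ∩ blk j).card with hn
  have hnfilter : ∀ j, n j = (B.filter fun p => p ∈ blk j).card := by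
    intro j
    show (B ∩ blk j).card = _
    rw [Finset.filter_mem_eq_inter]
  -- sum of n over b
  have hsum1 : ∑ j ∈ b, n j = 57 * 57 := by
    have : ∀ j ∈ b, n j = ∑ p ∈ B, if p ∈ blk j then 1 else 0 := by
      intro j _; rw [hnfilter, Finset.card_filter]
    rw [Finset.sum_congr rfl this, Finset.sum_comm]
    have inner : ∀ p ∈ B, (∑ j ∈ b, if p ∈ blk j then 1 else 0) = 57 := by
      intro p _
      rw [← Finset.card_filter]
      exact rep57 b blk hblk hlam p
    rw [Finset.sum_congr rfl inner, Finset.sum_const, smul_eq_mul, hB57]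
  -- sum of squares over b
  have hsum2 : ∑ j ∈ b, (n j) ^ 2 = 57 * 729 := by
    have expand : ∀ j ∈ b, (n j) ^ 2
        = ∑ p ∈ B, ∑ q ∈ B, (if p ∈ blk j then 1 else 0) * (if q ∈ blk j then 1 else 0) := by
      intro j _
      rw [hnfilter, Finset.card_filter, sq, Finset.sum_mul_sum]
    rw [Finset.sum_congr rfl expand, Finset.sum_comm]
    have inner1 : ∀ p ∈ B,
        (∑ j ∈ b, ∑ q ∈ B, (if p ∈ blk j then 1 else 0) * (if q ∈ blk j then 1 else 0)) = 729 := by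
      intro p hp
      rw [Finset.sum_comm]
      have inner2 : ∀ q ∈ B,
          (∑ j ∈ b, (if p ∈ blk j then 1 else 0) * (if q ∈ blk j then 1 else 0))
            = if q = p then 57 else 12 := by
        intro q _
        rw [sum_indic_mul]
        by_cases hqp : q = p
        · subst hqp
          rw [if_pos rfl, ← rep57 b blk hblk hlam q]
          congr 1
          apply Finset.filter_congr
          intro j _
          simp
        · rw [if_neg hqp]
          exact pair12 b blk hlam (fun hh => hqp (by rw [hh]))
      rw [Finset.sum_congr rfl inner2]
      have : ∀ q ∈ B, (if q = p then 57 else 12) = (if q = p then 45 else 0) + 12 := by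
        intro q _; by_cases hqp : q = p <;> simp [hqp]
      rw [Finset.sum_congr rfl this, Finset.sum_add_distrib, Finset.sum_ite_eq' B p (fun _ => 45),
        if_pos hp, Finset.sum_const, smul_eq_mul, hB57]
    rw [Finset.sum_congr rfl inner1, Finset.sum_const, smul_eq_mul, hB57]
  -- restrict to b.erase i₀
  have hni₀ : n i₀ = 57 := by
    show (B ∩ blk i₀).card = 57
    rw [← hBdef, Finset.inter_self, hB57]
  have hsum1e : ∑ j ∈ b.erase i₀, n j = 3192 := by
    have := Finset.sum_erase_add b n hi₀
    omega
  have hsum2e : ∑ j ∈ b.erase i₀, (n j) ^ 2 = 38304 := by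
    have := Finset.sum_erase_add b (fun j => (n j) ^ 2) hi₀
    simp only [hni₀] at this
    omega
  have hcarde : (b.erase i₀).card = 266 := by
    rw [Finset.card_erase_of_mem hi₀, hb]
  -- variance argument: every n j = 12 on b.erase i₀
  have hn12 : ∀ j ∈ b.erase i₀, n j = 12 := by
    have hzero : ∑ j ∈ b.erase i₀, ((n j : ℤ) - 12) ^ 2 = 0 := by
      have e1 : (∑ j ∈ b.erase i₀, ((n j : ℤ))) = 3192 := by exact_mod_cast hsum1e
      have e2 : (∑ j ∈ b.erase i₀, ((n j : ℤ)) ^ 2) = 38304 := by exact_mod_cast hsum2e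
      calc ∑ j ∈ b.erase i₀, ((n j : ℤ) - 12) ^ 2
          = ∑ j ∈ b.erase i₀, (((n j : ℤ)) ^ 2 - 24 * (n j : ℤ) + 144) :=
            Finset.sum_congr rfl fun j _ => by ring
        _ = 0 := by
            rw [Finset.sum_add_distrib, Finset.sum_sub_distrib, ← Finset.mul_sum,
              Finset.sum_const, nsmul_eq_mul, e1, e2, hcarde]
            norm_num
    intro j hj
    have := (Finset.sum_eq_zero_iff_of_nonneg (fun j _ => sq_nonneg _)).mp hzero j hj
    have : (n j : ℤ) = 12 := by
      have := pow_eq_zero_iff (n := 2) (by norm_num) |>.mp this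
      linarith [this]
    exact_mod_cast this
  -- build the derived design on B ≃ Fin 57
  let e : {x // x ∈ B} ≃ Fin 57 := B.equivFinOfCardEq hB57
  set blk' : ι → Finset (Fin 57) :=
    fun j => (univ : Finset (Fin 57)).filter fun y => ((e.symm y : {x // x ∈ B}) : Fin 267) ∈ blk j
    with hblk'
  have cardF : ∀ S : Finset (Fin 267),
      ((univ : Finset (Fin 57)).filter fun y => ((e.symm y : {x // x ∈ B}) : Fin 267) ∈ S).card
        = (B ∩ S).card := by
    intro S
    refine Finset.card_bij (fun y _ => ((e.symm y : {x // x ∈ B}) : Fin 267)) ?_ ?_ ?_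
    · intro y hy
      exact Finset.mem_inter.mpr ⟨(e.symm y).2, (Finset.mem_filter.mp hy).2⟩
    · intro y1 _ y2 _ hy
      exact e.symm.injective (Subtype.val_injective hy)
    · intro x hx
      obtain ⟨hxB, hxS⟩ := Finset.mem_inter.mp hx
      refine ⟨e ⟨x, hxB⟩, Finset.mem_filter.mpr ⟨mem_univ _, ?_⟩, ?_⟩
      · simpa using hxS
      · simp
  have memblk' : ∀ j y, y ∈ blk' j ↔ ((e.symm y : {x // x ∈ B}) : Fin 267) ∈ blk j := by
    intro j y; rw [hblk']; simp
  refine h ι (b.erase i₀) blk' ⟨⟨by simp, ?_, ?_⟩, ?_⟩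
  · -- blocks are 12-subsets
    intro j hj
    refine ⟨subset_univ _, ?_⟩
    rw [hblk', cardF (blk j)]
    exact hn12 j hj
  · -- 2-design with λ = 11
    intro T _ hT
    set T' : Finset (Fin 267) := T.image fun y => ((e.symm y : {x // x ∈ B}) : Fin 267) with hT'
    have hinj : Function.Injective fun y : Fin 57 => ((e.symm y : {x // x ∈ B}) : Fin 267) :=
      fun y1 y2 hy => e.symm.injective (Subtype.val_injective hy)
    have hT'card : T'.card = 2 := by rw [hT', Finset.card_image_of_injective _ hinj, hT]
    have hT'B : T' ⊆ B := by
      rw [hT', Finset.image_subset_iff]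
      intro y _
      exact (e.symm y).2
    have hiff : ∀ j, T ⊆ blk' j ↔ T' ⊆ blk j := by
      intro j
      rw [hT', Finset.image_subset_iff]
      constructor
      · intro hs y hy
        exact (memblk' j y).mp (hs hy)
      · intro hs y hy
        exact (memblk' j y).mpr (hs y hy)
    have hfe : ((b.erase i₀).filter fun j => T ⊆ blk' j)
        = (b.filter fun j => T' ⊆ blk j).erase i₀ := by
      ext j
      simp only [Finset.mem_filter, Finset.mem_erase]
      rw [hiff j]
      tauto
    have h12 : (b.filter fun j => T' ⊆ blk j).card = 12 := hlam T' (subset_univ _) hT'card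
    have hi₀mem : i₀ ∈ b.filter fun j => T' ⊆ blk j :=
      Finset.mem_filter.mpr ⟨hi₀, hT'B⟩
    rw [hfe, Finset.card_erase_of_mem hi₀mem, h12]
  · -- intersection numbers 0 or 3
    intro j hj l hl hjl
    have hjb := Finset.mem_erase.mp hj
    have hlb := Finset.mem_erase.mp hl
    have hint : blk' j ∩ blk' l = (univ : Finset (Fin 57)).filter
        fun y => ((e.symm y : {x // x ∈ B}) : Fin 267) ∈ blk j ∩ blk l := by
      ext y
      simp [memblk' j y, memblk' l y, hblk', and_assoc]
    rw [hint, cardF, ← Finset.inter_assoc]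
    exact htri i₀ hi₀ j hjb.2 l hlb.2 (Ne.symm hjb.1) (Ne.symm hlb.1) hjl
end

section
/- If no quasi-symmetric 2-(37,9,8) design with block intersection numbers 1 and 3 exists, then no quasi-3 design with parameters 2-(149,37,9) and triple intersection numbers 1 and 3 exists. -/
set_option maxRecDepth 8000

open Finset

lemma swap_count {ι α : Type*} [DecidableEq α] (S : Finset ι) (A : Finset α)
    (blk : ι → Finset α) :
    ∑ i ∈ S, (A.filter (· ∈ blk i)).card = ∑ p ∈ A, (S.filter fun i => p ∈ blk i).card := by
  simp only [card_filter]
  exact Finset.sum_comm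


lemma rep {ι : Type} (b : Finset ι) (blk : ι → Finset (Fin 149))
    (hk : ∀ i ∈ b, (blk i).card = 37)
    (hpair : ∀ p q : Fin 149, p ≠ q → (b.filter fun i => p ∈ blk i ∧ q ∈ blk i).card = 9)
    (p : Fin 149) : (b.filter fun i => p ∈ blk i).card = 37 := by
  classical
  set S := b.filter fun i => p ∈ blk i with hS
  have key := swap_count S (univ.erase p) blk
  have lhs : ∀ i ∈ S, ((univ.erase p).filter (· ∈ blk i)).card = 36 := by
    intro i hi
    have hib : i ∈ b := mem_of_mem_filter _ hi
    have hpi : p ∈ blk i := (mem_filter.mp hi).2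
    have he : (univ.erase p).filter (· ∈ blk i) = (blk i).erase p := by
      ext q; simp [mem_erase, mem_filter, and_comm]
    rw [he, card_erase_of_mem hpi, hk i hib]
  have rhs : ∀ q ∈ univ.erase p, (S.filter fun i => q ∈ blk i).card = 9 := by
    intro q hq
    have hqp : q ≠ p := (mem_erase.mp hq).1
    rw [hS, filter_filter]
    exact hpair p q hqp.symm
  rw [sum_congr rfl lhs, sum_congr rfl rhs, sum_const, sum_const,
    card_erase_of_mem (mem_univ p)] at key
  simp only [smul_eq_mul, card_univ, Fintype.card_fin] at key
  omega

lemma inter9 {ι : Type} (b : Finset ι) (blk : ι → Finset (Fin 149))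
    (hb : b.card = 149)
    (hk : ∀ i ∈ b, (blk i).card = 37)
    (hpair : ∀ p q : Fin 149, p ≠ q → (b.filter fun i => p ∈ blk i ∧ q ∈ blk i).card = 9)
    {i j : ι} (hi : i ∈ b) (hj : j ∈ b) (hij : i ≠ j) :
    (blk i ∩ blk j).card = 9 := by
  classical
  set T := b.erase j with hT
  set x : ι → ℕ := fun i => ((blk j).filter (· ∈ blk i)).card with hx
  have filter_erase1 : ∀ p : Fin 149, p ∈ blk j →
      (T.filter fun i => p ∈ blk i).card = 36 := by
    intro p hp
    have he : T.filter (fun i => p ∈ blk i) = (b.filter fun i => p ∈ blk i).erase j := by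
      ext a; simp only [hT, mem_erase, mem_filter]; tauto
    rw [he, card_erase_of_mem (mem_filter.mpr ⟨hj, hp⟩), rep b blk hk hpair p]
  have sum1 : ∑ i ∈ T, x i = 1332 := by
    rw [hx, swap_count T (blk j) blk, sum_congr rfl fun p hp => filter_erase1 p hp,
      sum_const, hk j hj]
    norm_num
  have sum2 : ∑ i ∈ T, x i * x i = 11988 := by
    have expand : ∀ i, x i * x i
        = ∑ p ∈ blk j, ∑ q ∈ blk j, if p ∈ blk i ∧ q ∈ blk i then 1 else 0 := by
      intro i
      rw [hx]
      simp only [card_filter]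
      rw [Finset.sum_mul_sum]
      refine sum_congr rfl fun p _ => sum_congr rfl fun q _ => ?_
      by_cases h1 : p ∈ blk i <;> by_cases h2 : q ∈ blk i <;> simp [h1, h2]
    calc ∑ i ∈ T, x i * x i
        = ∑ p ∈ blk j, ∑ q ∈ blk j, (T.filter fun i => p ∈ blk i ∧ q ∈ blk i).card := by
          simp only [expand, card_filter]
          rw [Finset.sum_comm]
          refine sum_congr rfl fun p _ => ?_
          rw [Finset.sum_comm]
      _ = ∑ _p ∈ blk j, 324 := by
          refine sum_congr rfl fun p hp => ?_
          have hpe : (T.filter fun i => p ∈ blk i ∧ p ∈ blk i).card = 36 := by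
            simp only [and_self]
            exact filter_erase1 p hp
          rw [← Finset.add_sum_erase _ _ hp]
          have h8 : ∀ q ∈ (blk j).erase p,
              (T.filter fun i => p ∈ blk i ∧ q ∈ blk i).card = 8 := by
            intro q hq
            have hqp : q ≠ p := (mem_erase.mp hq).1
            have hqj : q ∈ blk j := (mem_erase.mp hq).2
            have he : T.filter (fun i => p ∈ blk i ∧ q ∈ blk i)
                = (b.filter fun i => p ∈ blk i ∧ q ∈ blk i).erase j := by
              ext a; simp only [hT, mem_erase, mem_filter]; tauto
            rw [he, card_erase_of_mem (mem_filter.mpr ⟨hj, hp, hqj⟩),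
              hpair p q hqp.symm]
          rw [sum_congr rfl h8, sum_const, card_erase_of_mem hp, hk j hj, hpe]
          norm_num
      _ = 11988 := by rw [sum_const, hk j hj]; norm_num
  have hTcard : T.card = 148 := by rw [hT, card_erase_of_mem hj, hb]
  have hzero : ∀ i ∈ T, x i = 9 := by
    have hsq : ∑ i ∈ T, ((x i : ℤ) - 9) ^ 2 = 0 := by
      have hrw : ∀ i ∈ T, ((x i : ℤ) - 9) ^ 2 = (x i : ℤ) * (x i : ℤ) - 18 * (x i : ℤ) + 81 :=
        fun i _ => by ring
      have e1 : ∑ i ∈ T, ((x i : ℤ) * (x i : ℤ)) = 11988 := by exact_mod_cast sum2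
      have e0 : ∑ i ∈ T, ((x i : ℤ)) = 1332 := by exact_mod_cast sum1
      rw [sum_congr rfl hrw, Finset.sum_add_distrib, Finset.sum_sub_distrib,
        ← Finset.mul_sum, e1, e0, sum_const, hTcard]
      norm_num
    intro i hi
    have h0 := (Finset.sum_eq_zero_iff_of_nonneg (fun i _ => sq_nonneg ((x i : ℤ) - 9))).mp hsq i hi
    have h1 : (x i : ℤ) = 9 := by nlinarith [h0]
    exact_mod_cast h1
  have hiT : i ∈ T := mem_erase.mpr ⟨hij, hi⟩
  have he : blk i ∩ blk j = (blk j).filter (· ∈ blk i) := by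
    ext q; simp [mem_inter, mem_filter, and_comm]
  rw [he]
  exact hzero i hiT

/-- If no quasi-symmetric 2-(37,9,8) design with block intersection numbers 1 and 3 exists,
then no quasi-3 design with parameters 2-(149,37,9) and triple intersection numbers 1 and 3
exists. -/
theorem no_quasi3_149
    (h : ∀ (ι : Type) (b : Finset ι) (blk : ι → Finset (Fin 37)),
      ¬ (IsDesign Finset.univ b blk 37 9 2 8 ∧
        ∀ i ∈ b, ∀ j ∈ b, i ≠ j →
          (blk i ∩ blk j).card = 1 ∨ (blk i ∩ blk j).card = 3)) :
    ∀ (ι : Type) (b : Finset ι) (blk : ι → Finset (Fin 149)),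
      ¬ (IsDesign Finset.univ b blk 149 37 2 9 ∧ b.card = 149 ∧
        ∀ i ∈ b, ∀ j ∈ b, ∀ l ∈ b, i ≠ j → i ≠ l → j ≠ l →
          (blk i ∩ blk j ∩ blk l).card = 1 ∨ (blk i ∩ blk j ∩ blk l).card = 3) := by
  intro ι b blk
  rintro ⟨⟨-, hblk, hlam⟩, hb, htriple⟩
  classical
  have hk : ∀ i ∈ b, (blk i).card = 37 := fun i hi => (hblk i hi).2
  have hpair : ∀ p q : Fin 149, p ≠ q →
      (b.filter fun i => p ∈ blk i ∧ q ∈ blk i).card = 9 := by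
    intro p q hpq
    have h2 : ({p, q} : Finset (Fin 149)).card = 2 := card_pair hpq
    have hl := hlam {p, q} (subset_univ _) h2
    rw [← hl]
    have : (b.filter fun i => ({p, q} : Finset (Fin 149)) ⊆ blk i)
        = b.filter fun i => p ∈ blk i ∧ q ∈ blk i :=
      filter_congr fun i _ => by simp [insert_subset_iff]
    rw [this]
  obtain ⟨i₀, hi₀⟩ : ∃ i, i ∈ b := by
    have : 0 < b.card := by omega
    exact card_pos.mp this
  have hB : (blk i₀).card = 37 := hk i₀ hi₀
  have hcardB : Fintype.card {x // x ∈ blk i₀} = 37 := by rw [Fintype.card_coe, hB]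
  let e : {x // x ∈ blk i₀} ≃ Fin 37 := Fintype.equivFinOfCardEq hcardB
  set blk' : ι → Finset (Fin 37) :=
    fun j => ((blk j).subtype (· ∈ blk i₀)).image e with hblk'
  have mem_img : ∀ (s : Finset (Fin 149)) (u : Fin 37),
      u ∈ (s.subtype (· ∈ blk i₀)).image e ↔ (↑(e.symm u) : Fin 149) ∈ s := by
    intro s u
    simp only [mem_image, Finset.mem_subtype]
    constructor
    · rintro ⟨a, ha, rfl⟩; simpa using ha
    · intro hu; exact ⟨e.symm u, hu, e.apply_symm_apply u⟩
  have card_img : ∀ s : Finset (Fin 149),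
      ((s.subtype (· ∈ blk i₀)).image e).card = (s ∩ blk i₀).card := by
    intro s
    rw [card_image_of_injective _ e.injective, Finset.card_subtype,
      filter_mem_eq_inter]
  refine h ι (b.erase i₀) blk' ⟨⟨by simp, ?_, ?_⟩, ?_⟩
  · intro j hj
    refine ⟨subset_univ _, ?_⟩
    rw [hblk', card_img]
    exact inter9 b blk hb hk hpair (mem_of_mem_erase hj) hi₀ (mem_erase.mp hj).1
  · intro T _ hT2
    obtain ⟨u, v, huv, rfl⟩ := Finset.card_eq_two.mp hT2
    set p : Fin 149 := ↑(e.symm u) with hp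
    set q : Fin 149 := ↑(e.symm v) with hq
    have hpq : p ≠ q := fun hpq' => huv (e.symm.injective (Subtype.ext hpq'))
    have hpB : p ∈ blk i₀ := (e.symm u).2
    have hqB : q ∈ blk i₀ := (e.symm v).2
    have he : (b.erase i₀).filter (fun j => {u, v} ⊆ blk' j)
        = (b.filter fun j => p ∈ blk j ∧ q ∈ blk j).erase i₀ := by
      ext a
      simp only [mem_erase, mem_filter, insert_subset_iff, singleton_subset_iff,
        hblk', mem_img, ← hp, ← hq]
      tauto
    rw [he, card_erase_of_mem (mem_filter.mpr ⟨hi₀, hpB, hqB⟩), hpair p q hpq]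
  · intro i hi j hj hij
    have hiB : i ∈ b := mem_of_mem_erase hi
    have hjB : j ∈ b := mem_of_mem_erase hj
    have key : blk' i ∩ blk' j = ((blk i ∩ blk j).subtype (· ∈ blk i₀)).image e := by
      ext u
      simp only [mem_inter, hblk', mem_img]
    rw [key, card_img]
    exact htriple i hiB j hjB i₀ hi₀ hij (mem_erase.mp hi).1 (mem_erase.mp hj).1
end
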